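/- If a difference operator D = Σ_{j=0}^r a_j τ^j ∈ K[τ] of order r satisfies dim_C(ker D) = r (kernel taken inside K = C(x)), then D is completely factorable over K: there exist f₁,…,f_r ∈ K with D = a_r(τ − f₁)⋯(τ − f_r). -/

import Mathlib

open Polynomial RatFunc

noncomputable def shiftHom (h : ℂ) : RatFunc ℂ →ₐ[ℂ] RatFunc ℂ :=
  RatFunc.liftAlgHom (Polynomial.aeval (RatFunc.X - RatFunc.C h)) <|
    nonZeroDivisors_le_comap_nonZeroDivisors_of_injective _ <| by
      have key : ∀ p : ℂ[X], (Polynomial.aeval (RatFunc.X - RatFunc.C h)) p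
          = algebraMap ℂ[X] (RatFunc ℂ) (p.comp (Polynomial.X - Polynomial.C h)) := by
        intro p
        have := Polynomial.aeval_algHom_apply (IsScalarTower.toAlgHom ℂ ℂ[X] (RatFunc ℂ))
          (Polynomial.X - Polynomial.C h) p
        simpa [Polynomial.comp_eq_aeval, map_sub] using this
      intro p q hpq
      have h2 : p.comp (Polynomial.X - Polynomial.C h) = q.comp (Polynomial.X - Polynomial.C h) :=
        RatFunc.algebraMap_injective ℂ (by rw [← key, ← key, hpq])
      have h3 := congrArg (fun r : ℂ[X] => r.comp (Polynomial.X + Polynomial.C h)) h2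
      simpa [Polynomial.comp_assoc, Polynomial.sub_comp, Polynomial.X_comp,
        Polynomial.C_comp] using h3

-- key lemma restated outside
lemma aeval_key (h : ℂ) (p : ℂ[X]) : (Polynomial.aeval (RatFunc.X - RatFunc.C h)) p
    = algebraMap ℂ[X] (RatFunc ℂ) (p.comp (Polynomial.X - Polynomial.C h)) := by
  have := Polynomial.aeval_algHom_apply (IsScalarTower.toAlgHom ℂ ℂ[X] (RatFunc ℂ))
    (Polynomial.X - Polynomial.C h) p
  simpa [Polynomial.comp_eq_aeval, map_sub] using this

lemma shiftHom_apply (h : ℂ) (g : RatFunc ℂ) :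
    shiftHom h g = algebraMap ℂ[X] (RatFunc ℂ) (g.num.comp (Polynomial.X - Polynomial.C h)) /
      algebraMap ℂ[X] (RatFunc ℂ) (g.denom.comp (Polynomial.X - Polynomial.C h)) := by
  rw [shiftHom, RatFunc.liftAlgHom_apply, aeval_key, aeval_key]

-- composing with X - C h is injective
lemma comp_sub_injective (h : ℂ) : Function.Injective
    (fun p : ℂ[X] => p.comp (Polynomial.X - Polynomial.C h)) := by
  intro p q hpq
  have h3 := congrArg (fun r : ℂ[X] => r.comp (Polynomial.X + Polynomial.C h)) hpq
  simpa [Polynomial.comp_assoc, Polynomial.sub_comp, Polynomial.X_comp,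
    Polynomial.C_comp] using h3

-- a polynomial fixed by the shift is constant
lemma poly_fixed (h : ℂ) (hh : h ≠ 0) (p : ℂ[X])
    (hp : p.comp (Polynomial.X - Polynomial.C h) = p) : p = Polynomial.C (p.eval 0) := by
  have hev : ∀ x : ℂ, p.eval (x - h) = p.eval x := by
    intro x
    conv_rhs => rw [← hp]
    simp [Polynomial.eval_comp]
  have hn : ∀ n : ℕ, p.eval (-(n : ℂ) * h) = p.eval 0 := by
    intro n
    induction n with
    | zero => simp
    | succ n ih =>
      have : (-(↑(n+1) : ℂ) * h) = (-(n:ℂ) * h) - h := by push_cast; ring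
      rw [this, hev, ih]
  by_contra hcon
  have hq : p - Polynomial.C (p.eval 0) ≠ 0 := sub_ne_zero.mpr hcon
  have : {x : ℂ | (p - Polynomial.C (p.eval 0)).IsRoot x}.Infinite := by
    apply Set.infinite_of_injective_forall_mem (f := fun n : ℕ => -(n : ℂ) * h)
    · intro m n hmn
      have : (m : ℂ) = n := by
        simp only [mul_eq_mul_right_iff, neg_inj] at hmn
        rcases hmn with hmn | hmn
        · exact_mod_cast hmn
        · exact absurd hmn hh
      exact_mod_cast this
    · intro n
      have := hn n
      simp only [Polynomial.IsRoot, Polynomial.eval_sub, Polynomial.eval_C, neg_mul] at *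
      show Polynomial.eval (-(↑n * h)) p - Polynomial.eval 0 p = 0
      rw [this, sub_self]
  exact hq (Polynomial.eq_zero_of_infinite_isRoot _ this)

/-- A rational function fixed by the shift is constant. -/
lemma ratfunc_fixed (h : ℂ) (hh : h ≠ 0) (g : RatFunc ℂ) (hg : shiftHom h g = g) :
    ∃ c : ℂ, g = RatFunc.C c := by
  set s : ℂ[X] := Polynomial.X - Polynomial.C h with hs
  set p := g.num with hpdef
  set q := g.denom with hqdef
  have hq0 : q ≠ 0 := g.denom_ne_zero
  have hqs0 : q.comp s ≠ 0 := by
    intro h0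
    exact hq0 (comp_sub_injective h (by simpa using h0))
  have hcross : p * q.comp s = p.comp s * q := by
    have h1 : algebraMap ℂ[X] (RatFunc ℂ) (p.comp s) / algebraMap ℂ[X] (RatFunc ℂ) (q.comp s)
        = algebraMap ℂ[X] (RatFunc ℂ) p / algebraMap ℂ[X] (RatFunc ℂ) q := by
      rw [← shiftHom_apply, hg, RatFunc.num_div_denom]
    rw [div_eq_div_iff] at h1
    · apply RatFunc.algebraMap_injective ℂ
      rw [map_mul, map_mul]
      linear_combination -h1
    · exact RatFunc.algebraMap_ne_zero hqs0
    · exact RatFunc.algebraMap_ne_zero hq0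
  -- q divides q.comp s
  have hdvd : q ∣ q.comp s := by
    apply (RatFunc.isCoprime_num_denom g).symm.dvd_of_dvd_mul_left
    exact ⟨p.comp s, by rw [hcross]; ring⟩
  have hdegs : s.natDegree = 1 := Polynomial.natDegree_X_sub_C h
  have hdeg : (q.comp s).natDegree = q.natDegree := by
    rw [Polynomial.natDegree_comp, hdegs, mul_one]
  have hmono : (q.comp s).Monic := by
    have := Polynomial.leadingCoeff_comp (p := q) (q := s) (by rw [hdegs]; norm_num)
    rw [Polynomial.Monic, this, (RatFunc.monic_denom g).leadingCoeff]
    simp [hs, Polynomial.leadingCoeff_X_sub_C]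
  have hqq : q.comp s = q := by
    obtain ⟨t, ht⟩ := hdvd
    have hqmon := RatFunc.monic_denom g
    have ht0 : t ≠ 0 := by rintro rfl; simp [ht] at hqs0
    have hdt : t.natDegree = 0 := by
      have := hdeg
      rw [ht, Polynomial.natDegree_mul hq0 ht0] at this
      omega
    have hlt : t.leadingCoeff = 1 := by
      have := hmono
      rw [Polynomial.Monic, ht, Polynomial.leadingCoeff_mul, hqmon.leadingCoeff, one_mul] at this
      exact this
    have : t = 1 := by
      rw [Polynomial.eq_C_of_natDegree_eq_zero hdt]
      rw [Polynomial.eq_C_of_natDegree_eq_zero hdt] at hlt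
      simp only [Polynomial.leadingCoeff_C] at hlt
      rw [hlt]; simp
    rw [ht, this, mul_one]
  have hqc : q = 1 := by
    have h1 := poly_fixed h hh q hqq
    have hqmon : q.Monic := RatFunc.monic_denom g
    rw [h1] at hqmon ⊢
    rw [Polynomial.Monic, Polynomial.leadingCoeff_C] at hqmon
    rw [hqmon]; simp
  have hpp : p.comp s = p := by
    have := hcross
    rw [hqq] at this
    exact (mul_left_injective₀ hq0 this.symm)
  have hpc := poly_fixed h hh p hpp
  refine ⟨p.eval 0, ?_⟩
  conv_lhs => rw [← RatFunc.num_div_denom g]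
  rw [← hpdef, ← hqdef, hqc, hpc]
  simp [RatFunc.algebraMap_C]

/-- multiplication operator -/
noncomputable def mulOp (f : RatFunc ℂ) : Module.End ℂ (RatFunc ℂ) := LinearMap.mulLeft ℂ f

/-- shift operator τ -/
noncomputable def tauOp (h : ℂ) : Module.End ℂ (RatFunc ℂ) := (shiftHom h).toLinearMap

@[simp] lemma mulOp_apply (f v : RatFunc ℂ) : mulOp f v = f * v := rfl
@[simp] lemma tauOp_apply (h : ℂ) (v : RatFunc ℂ) : tauOp h v = shiftHom h v := rfl

lemma mulOp_mul (f g : RatFunc ℂ) : mulOp (f * g) = mulOp f * mulOp g := by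
  ext v; simp [mul_assoc]

lemma mulOp_add (f g : RatFunc ℂ) : mulOp (f + g) = mulOp f + mulOp g := by
  ext v; simp [add_mul]

lemma mulOp_zero : mulOp (0 : RatFunc ℂ) = 0 := by ext v; simp

lemma tau_mulOp (h : ℂ) (g : RatFunc ℂ) :
    tauOp h * mulOp g = mulOp (shiftHom h g) * tauOp h := by
  ext v; simp [Module.End.mul_apply]

lemma taupow_mulOp (h : ℂ) (j : ℕ) (g : RatFunc ℂ) :
    tauOp h ^ j * mulOp g = mulOp ((tauOp h ^ j) g) * tauOp h ^ j := by
  induction j with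
  | zero => simp
  | succ j ih =>
    rw [pow_succ', mul_assoc, ih, ← mul_assoc, tau_mulOp, mul_assoc, ← pow_succ']
    congr 1
    simp [pow_succ', Module.End.mul_apply]

/-- right division by (τ - f) -/
lemma divLemma (h : ℂ) (f : RatFunc ℂ) : ∀ (r : ℕ) (b : ℕ → RatFunc ℂ),
    ∃ (c : ℕ → RatFunc ℂ) (rem : RatFunc ℂ),
      (∑ j ∈ Finset.range (r + 2), mulOp (b j) * tauOp h ^ j)
        = (∑ j ∈ Finset.range (r + 1), mulOp (c j) * tauOp h ^ j) * (tauOp h - mulOp f)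
            + mulOp rem
      ∧ c r = b (r + 1) := by
  intro r
  induction r with
  | zero =>
    intro b
    refine ⟨fun _ => b 1, b 0 + b 1 * f, ?_, rfl⟩
    simp only [Finset.sum_range_succ, Finset.sum_range_zero, zero_add]
    rw [mulOp_add, mulOp_mul]
    ext v
    simp only [LinearMap.add_apply, Module.End.mul_apply, LinearMap.sub_apply, mulOp_apply,
      pow_zero, pow_one, Module.End.one_apply, tauOp_apply]
    ring
  | succ r ih =>
    intro b
    set σf := (tauOp h ^ (r + 1)) f with hσf
    obtain ⟨c, rem, hc, hcr⟩ := ih (fun j => if j = r + 1 then b (r+1) + b (r+2) * σf else b j)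
    refine ⟨fun j => if j = r + 1 then b (r + 2) else c j, rem, ?_, by simp⟩
    have hsplit : ∀ (d : ℕ → RatFunc ℂ) (n : ℕ),
        (∑ j ∈ Finset.range (n + 1), mulOp (d j) * tauOp h ^ j)
          = (∑ j ∈ Finset.range n, mulOp (d j) * tauOp h ^ j) + mulOp (d n) * tauOp h ^ n :=
      fun d n => Finset.sum_range_succ _ n
    -- expand both sides
    rw [hsplit b (r + 2), hsplit (fun j => if j = r + 1 then b (r + 2) else c j) (r + 1)]
    have hcongr1 : (∑ j ∈ Finset.range (r + 1),
        mulOp ((fun j => if j = r + 1 then b (r + 2) else c j) j) * tauOp h ^ j)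
        = ∑ j ∈ Finset.range (r + 1), mulOp (c j) * tauOp h ^ j := by
      apply Finset.sum_congr rfl
      intro j hj
      rw [Finset.mem_range] at hj
      simp [Nat.ne_of_lt hj]
    rw [hcongr1]
    have hb' : (∑ j ∈ Finset.range (r + 2), mulOp (b j) * tauOp h ^ j)
        = (∑ j ∈ Finset.range (r + 2),
            mulOp ((fun j => if j = r + 1 then b (r+1) + b (r+2) * σf else b j) j)
              * tauOp h ^ j) - mulOp (b (r+2) * σf) * tauOp h ^ (r + 1) := by
      rw [hsplit b (r + 1), hsplit (fun j => if j = r + 1 then b (r+1) + b (r+2) * σf else b j) (r + 1)]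
      have hcongr2 : (∑ j ∈ Finset.range (r + 1),
          mulOp ((fun j => if j = r + 1 then b (r+1) + b (r+2) * σf else b j) j) * tauOp h ^ j)
          = ∑ j ∈ Finset.range (r + 1), mulOp (b j) * tauOp h ^ j := by
        apply Finset.sum_congr rfl
        intro j hj
        rw [Finset.mem_range] at hj
        simp [Nat.ne_of_lt hj]
      rw [hcongr2]
      simp only [↓reduceIte, mulOp_add, mulOp_mul, add_mul]
      abel
    rw [hb', hc]
    -- remaining: algebra
    have htop : mulOp (b (r + 2)) * tauOp h ^ (r + 2)
        = mulOp (b (r + 2)) * tauOp h ^ (r + 1) * (tauOp h - mulOp f)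
          + mulOp (b (r + 2) * σf) * tauOp h ^ (r + 1) := by
      rw [mul_sub, mulOp_mul, hσf]
      rw [mul_assoc (mulOp (b (r+2))) (tauOp h ^ (r+1)) (mulOp f), taupow_mulOp]
      rw [← mul_assoc, mul_assoc (mulOp (b (r+2))) (tauOp h ^ (r+1)) (tauOp h), ← pow_succ]
      abel
    rw [add_mul, htop]
    abel

/-- kernel of τ - f is at most one-dimensional -/
lemma kerT (h : ℂ) (hh : h ≠ 0) (u₀ w f : RatFunc ℂ) (hu0 : u₀ ≠ 0)
    (hu : shiftHom h u₀ = f * u₀) (hw : shiftHom h w = f * w) : ∃ c : ℂ, w = c • u₀ := by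
  by_cases hw0 : w = 0
  · exact ⟨0, by simp [hw0]⟩
  have hσu : shiftHom h u₀ ≠ 0 := fun h0 =>
    hu0 ((map_eq_zero_iff (shiftHom h) (shiftHom h).toRingHom.injective).mp h0)
  have hf0 : f ≠ 0 := by
    intro h0; rw [h0, zero_mul] at hu; exact hσu hu
  have hfix : shiftHom h (w / u₀) = w / u₀ := by
    rw [map_div₀, hu, hw, mul_div_mul_left _ _ hf0]
  obtain ⟨c, hc⟩ := ratfunc_fixed h hh _ hfix
  refine ⟨c, ?_⟩
  have : w / u₀ * u₀ = RatFunc.C c * u₀ := by rw [hc]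
  rw [div_mul_cancel₀ _ hu0] at this
  rw [this, Algebra.smul_def]
  congr 1

lemma factorLemma (h : ℂ) (hh : h ≠ 0) : ∀ (r : ℕ) (b : ℕ → RatFunc ℂ)
    (u : Fin r → RatFunc ℂ), LinearIndependent ℂ u →
    (∀ i, (∑ j ∈ Finset.range (r + 1), mulOp (b j) * tauOp h ^ j) (u i) = 0) →
    ∃ f : Fin r → RatFunc ℂ,
      (∑ j ∈ Finset.range (r + 1), mulOp (b j) * tauOp h ^ j)
        = mulOp (b r) * (List.ofFn (fun i => tauOp h - mulOp (f i))).prod := by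
  intro r
  induction r with
  | zero =>
    intro b u _ _
    exact ⟨Fin.elim0, by simp⟩
  | succ r ih =>
    intro b u hind hker
    have hulast : u (Fin.last r) ≠ 0 := hind.ne_zero _
    set u₀ := u (Fin.last r) with hu₀
    set f₀ : RatFunc ℂ := shiftHom h u₀ / u₀ with hf₀
    have hTu₀ : shiftHom h u₀ = f₀ * u₀ := by
      rw [hf₀, div_mul_cancel₀ _ hulast]
    obtain ⟨c, rem, hc, hcr⟩ := divLemma h f₀ r b
    set T : Module.End ℂ (RatFunc ℂ) := tauOp h - mulOp f₀ with hT
    have hTu0 : T u₀ = 0 := by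
      rw [hT]
      simp only [LinearMap.sub_apply, tauOp_apply, mulOp_apply]
      rw [hTu₀]; ring
    -- remainder is zero
    have hrem : rem = 0 := by
      have h0 := hker (Fin.last r)
      rw [hc] at h0
      simp only [LinearMap.add_apply, Module.End.mul_apply] at h0
      rw [← hu₀] at h0
      rw [show (tauOp h - mulOp f₀) u₀ = T u₀ from rfl, hTu0, map_zero, zero_add] at h0
      simp only [mulOp_apply] at h0
      exact (mul_eq_zero.mp h0).resolve_right hulast
    have hD : (∑ j ∈ Finset.range (r + 2), mulOp (b j) * tauOp h ^ j)
        = (∑ j ∈ Finset.range (r + 1), mulOp (c j) * tauOp h ^ j) * T := by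
      rw [hc, hrem, mulOp_zero, add_zero, hT]
    -- the family v
    set v : Fin r → RatFunc ℂ := fun i => T (u i.castSucc) with hv
    have hvker : ∀ i, (∑ j ∈ Finset.range (r + 1), mulOp (c j) * tauOp h ^ j) (v i) = 0 := by
      intro i
      have := hker i.castSucc
      rw [hD] at this
      simpa [Module.End.mul_apply] using this
    have hvind : LinearIndependent ℂ v := by
      rw [Fintype.linearIndependent_iff]
      intro g hg i
      have hTw : T (∑ i, g i • u i.castSucc) = 0 := by
        rw [map_sum]
        simpa [map_smul] using hg
      set w := ∑ i, g i • u i.castSucc with hwdef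
      have hw : shiftHom h w = f₀ * w := by
        have := hTw
        rw [hT] at this
        simp only [LinearMap.sub_apply, tauOp_apply, mulOp_apply] at this
        linear_combination this
      obtain ⟨cc, hcc⟩ := kerT h hh u₀ w f₀ hulast hTu₀ hw
      -- build full combination
      have hfull : ∑ j, (Fin.snoc g (-cc) : Fin (r+1) → ℂ) j • u j = 0 := by
        rw [Fin.sum_univ_castSucc]
        simp only [Fin.snoc_castSucc, Fin.snoc_last]
        rw [← hwdef, hcc, ← hu₀]
        module
      have := (Fintype.linearIndependent_iff.mp hind) _ hfull
      have hgi := this i.castSucc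
      simpa using hgi
    obtain ⟨f, hf⟩ := ih c v hvind hvker
    have hD2 : (∑ j ∈ Finset.range (r + 1 + 1), mulOp (b j) * tauOp h ^ j)
        = (∑ j ∈ Finset.range (r + 1), mulOp (c j) * tauOp h ^ j) * T := hD
    refine ⟨Fin.snoc f f₀, ?_⟩
    rw [hD2, hf, hcr]
    rw [List.ofFn_succ' (fun i : Fin (r+1) =>
      tauOp h - mulOp ((Fin.snoc f f₀ : Fin (r+1) → RatFunc ℂ) i))]
    simp only [Fin.snoc_castSucc, Fin.snoc_last]
    rw [List.prod_concat, ← mul_assoc]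

/-- if a difference operator D = Σ_{j=0}^r a_j τ^j of order r has
dim_ℂ(ker D) = r, then D is completely factorable over K:
D = a_r·(τ − f₁)⋯(τ − f_r) for some f₁,…,f_r ∈ K. -/
theorem complete_factorability_of_full_kernel (h : ℂ) (hh : h ≠ 0)
    (r : ℕ) (a : ℕ → RatFunc ℂ) (har : a r ≠ 0)
    (D : Module.End ℂ (RatFunc ℂ))
    (hD : D = ∑ j ∈ Finset.range (r + 1), mulOp (a j) * (tauOp h) ^ j)
    (hfd : FiniteDimensional ℂ (LinearMap.ker D))
    (hker : Module.finrank ℂ (LinearMap.ker D) = r) :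
    ∃ f : Fin r → RatFunc ℂ,
      D = mulOp (a r) * (List.ofFn (fun i => tauOp h - mulOp (f i))).prod := by
  let B := Module.finBasis ℂ (LinearMap.ker D)
  let e : Fin r ≃ Fin (Module.finrank ℂ (LinearMap.ker D)) := finCongr hker.symm
  set u : Fin r → RatFunc ℂ := fun i => ((B (e i) : LinearMap.ker D) : RatFunc ℂ) with hu
  have hind : LinearIndependent ℂ u := by
    have h1 : LinearIndependent ℂ (fun i => B (e i)) :=
      B.linearIndependent.comp e e.injective
    have h2 := h1.map' (Submodule.subtype _) (Submodule.ker_subtype _)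
    exact h2
  have hkeru : ∀ i, (∑ j ∈ Finset.range (r + 1), mulOp (a j) * tauOp h ^ j) (u i) = 0 := by
    intro i
    rw [← hD]
    exact (B (e i)).2
  obtain ⟨f, hf⟩ := factorLemma h hh r a u hind hkeru
  exact ⟨f, hD ▸ hf⟩
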